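/- For the complex numbers, K̃ equals ℚ: an element r ∈ ℂ admits a finite adequate set if and only if r is rational. -/

import Mathlib

set_option synthInstance.maxHeartbeats 1000000
set_option maxHeartbeats 2000000

/-- A finite set `A` is adequate for `r`: it contains `r`, and every map `f`
preserving `1` (when `1 ∈ A`) and preserving sums/products lying in `A` fixes `r`. -/
def Adequate {K : Type*} [Field K] (A : Finset K) (r : K) : Prop :=
  r ∈ A ∧ ∀ f : K → K,
    ((1 : K) ∈ A → f 1 = 1) →
    (∀ a b : K, a ∈ A → b ∈ A → a + b ∈ A → f (a + b) = f a + f b) →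
    (∀ a b : K, a ∈ A → b ∈ A → a * b ∈ A → f (a * b) = f a * f b) →
    f r = r


open IntermediateField

theorem singleton_indep {r : ℂ} (hr : Transcendental ℚ r) :
    AlgebraicIndependent ℚ ((↑) : ({r} : Set ℂ) → ℂ) := by
  have h1 : AlgebraicIndependent ℚ (fun _ : Unit => r) :=
    algebraicIndependent_unique_type_iff.2 (by simpa using hr)
  have := h1.to_subtype_range
  convert this using 2 <;> simp [Set.range]

theorem get_basis {r : ℂ} (hr : Transcendental ℚ r) :
    ∃ s : Set ℂ, r ∈ s ∧ IsTranscendenceBasis ℚ ((↑) : s → ℂ) := by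
  obtain ⟨s, hrs, hmax⟩ := exists_maximal_algebraicIndependent (R := ℚ) {r} Set.univ
    (Set.subset_univ _) (singleton_indep hr)
  refine ⟨s, hrs rfl, hmax.1.1, fun t ht hst => ?_⟩
  simp only [Subtype.range_coe_subtype, Set.setOf_mem_eq] at *
  exact hmax.eq_of_le ⟨ht, Set.subset_univ _⟩ hst

def CC : Type := ℂ
noncomputable instance : Field CC := inferInstanceAs (Field ℂ)
instance : IsAlgClosed CC := inferInstanceAs (IsAlgClosed ℂ)
def ccHom : CC →+* ℂ := RingHom.id ℂ
def ccHom' : ℂ →+* CC := RingHom.id ℂ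

theorem extend_hom (F : Type*) [Field F] [Algebra F ℂ]
    [Algebra.IsAlgebraic F ℂ] (j : F →+* ℂ) :
    ∃ σ : ℂ →+* ℂ, ∀ x : F, σ (algebraMap F ℂ x) = j x := by
  letI : Algebra F CC := (ccHom'.comp j).toAlgebra
  haveI : FaithfulSMul F ℂ :=
    (faithfulSMul_iff_algebraMap_injective F ℂ).mpr (algebraMap F ℂ).injective
  haveI : FaithfulSMul F CC :=
    (faithfulSMul_iff_algebraMap_injective F CC).mpr (ccHom'.comp j).injective
  let σ₀ : ℂ →ₐ[F] CC := IsAlgClosed.lift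
  refine ⟨ccHom.comp σ₀.toRingHom, fun x => ?_⟩
  have h1 := σ₀.commutes x
  simp only [RingHom.comp_apply, AlgHom.toRingHom_eq_coe, RingHom.coe_coe]
  rw [h1]; rfl

theorem move_transcendental {r : ℂ} (hr : Transcendental ℚ r) :
    ∃ σ : ℂ →+* ℂ, σ r ≠ r := by
  classical
  obtain ⟨s, hrs, hbasis⟩ := get_basis hr
  have hx : AlgebraicIndependent ℚ ((↑) : s → ℂ) := hbasis.1
  letI : Algebra ℚ (FractionRing (MvPolynomial s ℚ)) := OreLocalization.instAlgebra
  set i₀ : s := ⟨r, hrs⟩ with hi₀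
  set fpol : s → Polynomial ℚ := fun i => if i = i₀ then Polynomial.X ^ 2 else Polynomial.X
    with hfpol
  have hf : ∀ i, Transcendental ℚ (fpol i) := by
    intro i; rw [hfpol]; dsimp only; split
    · exact (Polynomial.transcendental_X ℚ).pow two_pos
    · exact Polynomial.transcendental_X ℚ
  set y : s → ℂ := fun i => Polynomial.aeval (i : ℂ) (fpol i) with hy_def
  have hy : AlgebraicIndependent ℚ y := hx.polynomial_aeval_of_transcendental hf
  set L := IntermediateField.adjoin ℚ (Set.range ((↑) : s → ℂ)) with hL
  let j : L →+* ℂ := ((IntermediateField.adjoin ℚ (Set.range y)).val.toRingHom).comp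
    ((hy.aevalEquivField.toRingEquiv.toRingHom).comp
      (hx.aevalEquivField.symm.toRingEquiv.toRingHom))
  haveI : Algebra.IsAlgebraic L ℂ := hbasis.isAlgebraic_field
  obtain ⟨σ, hσ⟩ := extend_hom L j
  have hrL : r ∈ L := IntermediateField.subset_adjoin ℚ _ ⟨i₀, rfl⟩
  have hre : algebraMap L ℂ ⟨r, hrL⟩ = r := rfl
  have h1 : hx.aevalEquivField (algebraMap (MvPolynomial s ℚ)
      (FractionRing (MvPolynomial s ℚ)) (MvPolynomial.X i₀)) = (⟨r, hrL⟩ : L) :=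
    Subtype.ext ((hx.aevalEquivField_algebraMap_apply_coe (MvPolynomial.X i₀)).trans
      (show (MvPolynomial.aeval ((↑) : s → ℂ)) (MvPolynomial.X i₀) = ((⟨r, hrL⟩ : L) : ℂ)
        by simp [hi₀]))
  have h2 : hx.aevalEquivField.symm (⟨r, hrL⟩ : L) = algebraMap (MvPolynomial s ℚ)
      (FractionRing (MvPolynomial s ℚ)) (MvPolynomial.X i₀) := by
    have := congrArg hx.aevalEquivField.symm h1
    rw [AlgEquiv.symm_apply_apply] at this
    exact this.symm
  have key : σ r = r ^ 2 := by
    rw [← hre, hσ]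
    show ((IntermediateField.adjoin ℚ (Set.range y)).val
      (hy.aevalEquivField (hx.aevalEquivField.symm ⟨r, hrL⟩))) = r ^ 2
    rw [h2]
    refine (hy.aevalEquivField_algebraMap_apply_coe (MvPolynomial.X i₀)).trans ?_
    show (MvPolynomial.aeval y) (MvPolynomial.X i₀) = r ^ 2
    rw [MvPolynomial.aeval_X]
    simp [hy_def, hfpol, hi₀]
  refine ⟨σ, ?_⟩
  rw [key]
  intro h
  have h0 : r * (r - 1) = 0 := by linear_combination h
  rcases mul_eq_zero.1 h0 with h' | h'
  · exact hr (h' ▸ isAlgebraic_zero)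
  · exact hr ((sub_eq_zero.mp h') ▸ isAlgebraic_one)






theorem alg_mem_range {A : Type*} [CommRing A] [IsDomain A] [Algebra ℚ A]
    (φ : A →ₐ[ℚ] ℚ) {x : A} (hx : IsIntegral ℚ x) :
    x ∈ (algebraMap ℚ A).range := by
  have hroot : Polynomial.aeval (φ x) (minpoly ℚ x) = 0 := by
    rw [Polynomial.aeval_algHom_apply, minpoly.aeval, map_zero]
  have hdeg : (minpoly ℚ x).degree = 1 :=
    Polynomial.degree_eq_one_of_irreducible_of_root (minpoly.irreducible hx)
      (by simpa [Polynomial.IsRoot, Polynomial.aeval_def, Polynomial.eval₂_eq_eval_map]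
        using hroot)
  exact minpoly.degree_eq_one_iff.mp hdeg

theorem algebraic_not_mem_adjoin {r : ℂ} (halg : IsIntegral ℚ r)
    (hirr : r ∉ Set.range ((↑) : ℚ → ℂ)) {s : Set ℂ}
    (hx : AlgebraicIndependent ℚ ((↑) : s → ℂ)) :
    r ∉ IntermediateField.adjoin ℚ (Set.range ((↑) : s → ℂ)) := by
  intro hrL
  letI : Algebra ℚ (FractionRing (MvPolynomial s ℚ)) := OreLocalization.instAlgebra
  set L := IntermediateField.adjoin ℚ (Set.range ((↑) : s → ℂ)) with hLdef
  set a : L := ⟨r, hrL⟩ with ha_def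
  have ha : IsIntegral ℚ a := by
    have : algebraMap L ℂ a = r := rfl
    rw [← isIntegral_algebraMap_iff (algebraMap L ℂ).injective, this]
    exact halg
  have hz : IsIntegral ℚ (hx.aevalEquivField.symm a) :=
    ha.map hx.aevalEquivField.symm.toAlgHom
  have hz2 : IsIntegral (MvPolynomial s ℚ) (hx.aevalEquivField.symm a) :=
    hz.tower_top
  obtain ⟨P, hP⟩ := IsIntegrallyClosed.isIntegral_iff.mp hz2
  have hPint : IsIntegral ℚ P := by
    rw [← isIntegral_algebraMap_iff
      (IsFractionRing.injective (MvPolynomial s ℚ) (FractionRing (MvPolynomial s ℚ))), hP]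
    exact hz
  obtain ⟨q, hq⟩ := alg_mem_range (MvPolynomial.aeval (fun _ => (0 : ℚ))) hPint
  apply hirr
  refine ⟨q, ?_⟩
  have h1 : hx.aevalEquivField.symm a =
      algebraMap ℚ (FractionRing (MvPolynomial s ℚ)) q := by
    rw [← hP, ← hq, ← IsScalarTower.algebraMap_apply]
  have h2 : a = algebraMap ℚ L q := by
    have := congrArg hx.aevalEquivField h1
    rwa [AlgEquiv.apply_symm_apply, AlgEquiv.commutes] at this
  have h3 : r = algebraMap ℚ ℂ q := by
    have : algebraMap L ℂ a = algebraMap L ℂ (algebraMap ℚ L q) := congrArg _ h2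
    rwa [← IsScalarTower.algebraMap_apply] at this
  rw [h3]
  exact (eq_ratCast (algebraMap ℚ ℂ) q).symm

theorem move_algebraic {r : ℂ} (halg : IsIntegral ℚ r)
    (hnotmem : ∀ s : Set ℂ, AlgebraicIndependent ℚ ((↑) : s → ℂ) →
      r ∉ IntermediateField.adjoin ℚ (Set.range ((↑) : s → ℂ))) :
    ∃ σ : ℂ →+* ℂ, σ r ≠ r := by
  obtain ⟨s, hbasis⟩ := exists_isTranscendenceBasis ℚ ℂ
  set L := IntermediateField.adjoin ℚ (Set.range ((↑) : s → ℂ)) with hLdef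
  haveI : Algebra.IsAlgebraic L ℂ := hbasis.isAlgebraic_field
  have hrL : r ∉ L := hnotmem s hbasis.1
  have hint : IsIntegral L r := (Algebra.IsAlgebraic.isAlgebraic (R := L) r).isIntegral
  have hdeg : 2 ≤ (minpoly L r).natDegree := by
    rw [minpoly.two_le_natDegree_iff hint]
    intro ⟨a, ha⟩
    exact hrL (ha ▸ a.2)
  -- find another root
  have hsplits : Polynomial.Splits ((minpoly L r).map (algebraMap L ℂ)) :=
    IsAlgClosed.splits _
  have hsep : (minpoly L r).Separable := (minpoly.irreducible hint).separable
  have hnodup : ((minpoly L r).aroots ℂ).Nodup :=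
    (Polynomial.nodup_roots (hsep.map))
  have hcard : 2 ≤ ((minpoly L r).aroots ℂ).toFinset.card := by
    rw [Multiset.toFinset_card_of_nodup hnodup]
    rw [show ((minpoly L r).aroots ℂ) = ((minpoly L r).map (algebraMap L ℂ)).roots from rfl]
    rw [← hsplits.natDegree_eq_card_roots, Polynomial.natDegree_map]
    exact hdeg
  have hrmem : r ∈ ((minpoly L r).aroots ℂ).toFinset := by
    rw [Multiset.mem_toFinset, Polynomial.mem_aroots]
    exact ⟨minpoly.ne_zero hint, minpoly.aeval L r⟩
  obtain ⟨r', hr'mem, hr'ne⟩ :=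
    Finset.exists_mem_ne (lt_of_lt_of_le one_lt_two hcard) r
  have hr'root : r' ∈ (minpoly L r).aroots ℂ := Multiset.mem_toFinset.mp hr'mem
  -- the hom moving r to r'
  let j : L⟮r⟯ →ₐ[L] ℂ :=
    (IntermediateField.algHomAdjoinIntegralEquiv L hint).symm ⟨r', hr'root⟩
  have hjgen : j (IntermediateField.AdjoinSimple.gen L r) = r' :=
    IntermediateField.algHomAdjoinIntegralEquiv_symm_apply_gen L hint _
  haveI : Algebra.IsAlgebraic (L⟮r⟯) ℂ :=
    Algebra.IsAlgebraic.tower_top (K := L) L⟮r⟯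
  obtain ⟨σ, hσ⟩ := extend_hom L⟮r⟯ j.toRingHom
  refine ⟨σ, ?_⟩
  have hre : algebraMap L⟮r⟯ ℂ (IntermediateField.AdjoinSimple.gen L r) = r := rfl
  rw [← hre, hσ]
  show j (IntermediateField.AdjoinSimple.gen L r) ≠ r
  rw [hjgen]
  exact hr'ne

theorem rat_adequate (q : ℚ) : ∃ A : Finset ℂ, Adequate A ((q : ℂ)) := by
  classical
  set N : ℕ := max q.den q.num.natAbs + 1 with hN
  set A : Finset ℂ := ((Finset.Icc (-(N : ℤ)) (N : ℤ)).image (fun k : ℤ => ((k : ℂ)))) ∪ {(q : ℂ)}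
    with hA
  have hmem : ∀ k : ℤ, k.natAbs ≤ N → ((k : ℂ)) ∈ A := by
    intro k hk
    apply Finset.mem_union_left
    exact Finset.mem_image.mpr ⟨k, Finset.mem_Icc.mpr (by constructor <;> omega), rfl⟩
  refine ⟨A, Finset.mem_union_right _ (Finset.mem_singleton_self _), ?_⟩
  intro f h1 hadd hmul
  have h0A : (0 : ℂ) ∈ A := by simpa using hmem 0 (by omega)
  have h1A : (1 : ℂ) ∈ A := by simpa using hmem 1 (by omega)
  have f0 : f 0 = 0 := by
    have := hadd 0 0 h0A h0A (by simpa using h0A)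
    rw [add_zero] at this
    exact left_eq_add.mp this
  have hf1 : f 1 = 1 := h1 h1A
  have fnat : ∀ k : ℕ, k ≤ N → f k = k := by
    intro k
    induction k with
    | zero => intro _; simpa using f0
    | succ n ih =>
      intro hk
      have hn := ih (by omega)
      have hmemn : ((n : ℂ)) ∈ A := by simpa using hmem n (by omega)
      have hmems : ((n : ℂ) + 1) ∈ A := by
        have := hmem (n + 1) (by omega); push_cast at this; convert this using 2
      have := hadd n 1 hmemn h1A hmems
      push_cast
      rw [this, hn, hf1]
  have fneg1 : f (-1) = -1 := by
    have hm : ((-1 : ℂ)) ∈ A := by simpa using hmem (-1) (by omega)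
    have := hadd (-1) 1 hm h1A (by simpa using h0A)
    rw [neg_add_cancel, f0, hf1] at this
    linear_combination -this
  have fint : ∀ k : ℤ, k.natAbs ≤ N → f k = k := by
    intro k hk
    rcases le_or_gt 0 k with h | h
    · obtain ⟨m, rfl⟩ := Int.eq_ofNat_of_zero_le h
      push_cast
      exact fnat m (by omega)
    · have hm : ((-1 : ℂ)) ∈ A := by simpa using hmem (-1) (by omega)
      have hmk : (((-k : ℤ) : ℂ)) ∈ A := hmem (-k) (by omega)
      have hprod : ((-1 : ℂ)) * ((-k : ℤ) : ℂ) = (k : ℂ) := by push_cast; ring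
      have := hmul (-1) ((-k : ℤ) : ℂ) hm hmk (by rw [hprod]; exact hmem k hk)
      rw [hprod, fneg1] at this
      have hfk : f ((-k : ℤ) : ℂ) = ((-k : ℤ) : ℂ) := by
        obtain ⟨m, hmeq⟩ := Int.eq_ofNat_of_zero_le (by omega : (0:ℤ) ≤ -k)
        rw [hmeq]; push_cast; exact fnat m (by omega)
      rw [hfk] at this
      rw [this]; push_cast; ring
  -- final step
  have hden : ((q.den : ℤ) : ℂ) ∈ A := hmem q.den (by omega)
  have hqA : (q : ℂ) ∈ A := Finset.mem_union_right _ (Finset.mem_singleton_self _)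
  have hprod : (((q.den : ℤ) : ℂ)) * (q : ℂ) = ((q.num : ℤ) : ℂ) := by
    have hd : ((q.den : ℤ) : ℂ) ≠ 0 := by exact_mod_cast q.den_ne_zero
    rw [Rat.cast_def]
    push_cast
    field_simp
  have hnum : (((q.num : ℤ) : ℂ)) ∈ A := hmem q.num (by omega)
  have := hmul _ _ hden hqA (by rw [hprod]; exact hnum)
  rw [hprod, fint q.num (by omega), fint q.den (by omega)] at this
  have hd0 : (((q.den : ℤ) : ℂ)) ≠ 0 := by
    exact_mod_cast q.den_ne_zero
  exact mul_left_cancel₀ hd0 (this.symm.trans hprod.symm)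

theorem tilde_complex_eq_rat :
    {r : ℂ | ∃ A : Finset ℂ, Adequate A r} = Set.range ((↑) : ℚ → ℂ) := by
  ext r
  simp only [Set.mem_setOf_eq, Set.mem_range]
  constructor
  · rintro ⟨A, hrA, hA⟩
    by_contra hirr
    push_neg at hirr
    have hirr' : r ∉ Set.range ((↑) : ℚ → ℂ) := by
      rintro ⟨q, hq⟩; exact hirr q hq
    have hfix : ∀ σ : ℂ →+* ℂ, σ r = r := fun σ =>
      hA σ (fun _ => map_one σ) (fun a b _ _ _ => map_add σ a b)
        (fun a b _ _ _ => map_mul σ a b)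
    by_cases halg : IsAlgebraic ℚ r
    · obtain ⟨σ, hσ⟩ := move_algebraic halg.isIntegral
        (fun s hs => algebraic_not_mem_adjoin halg.isIntegral hirr' hs)
      exact hσ (hfix σ)
    · obtain ⟨σ, hσ⟩ := move_transcendental halg
      exact hσ (hfix σ)
  · rintro ⟨q, rfl⟩
    exact rat_adequate q
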